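/- Let b, λ, ε > 0, m ≥ 0 and χ > |1-m|. Define U(x) = (λ²(χ+1-m)²)/(2ε(χ+m+1)b^{1-m}) · (1 + (λ(χ+m-1)(χ+1-m))/(2ε(χ+m+1)b^{1-m}) x)^{-2χ/(χ+m-1)} and W(x) = b(1 + (λ(χ+m-1)(χ+1-m))/(2ε(χ+m+1)b^{1-m}) x)^{-2/(χ+m-1)} on [0,∞). Then ε W''(x) = U(x) W(x)^m for all x ≥ 0. -/
import Mathlib

theorem steady_state_equation
    (b lam eps m chi : ℝ) (hb : 0 < b) (hlam : 0 < lam) (heps : 0 < eps)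
    (hm : 0 ≤ m) (hchi : |1 - m| < chi)
    (U W : ℝ → ℝ)
    (hU : U = fun x =>
      (lam ^ 2 * (chi + 1 - m) ^ 2) / (2 * eps * (chi + m + 1) * b ^ (1 - m)) *
        (1 + (lam * (chi + m - 1) * (chi + 1 - m)) /
          (2 * eps * (chi + m + 1) * b ^ (1 - m)) * x) ^ (-(2 * chi) / (chi + m - 1)))
    (hW : W = fun x =>
      b * (1 + (lam * (chi + m - 1) * (chi + 1 - m)) /
        (2 * eps * (chi + m + 1) * b ^ (1 - m)) * x) ^ (-2 / (chi + m - 1))) :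
    ∀ x : ℝ, 0 ≤ x → eps * deriv (deriv W) x = U x * (W x) ^ m := by
  intro x hx
  obtain ⟨h1, h2⟩ := abs_lt.mp hchi
  have hs : 0 < chi + m - 1 := by linarith
  have ht : 0 < chi + 1 - m := by linarith
  have hs2 : 0 < chi + m + 1 := by linarith
  have hB : 0 < b ^ (1 - m) := Real.rpow_pos_of_pos hb _
  set c : ℝ := lam * (chi + m - 1) * (chi + 1 - m) / (2 * eps * (chi + m + 1) * b ^ (1 - m))
    with hc_def
  have hc : 0 < c := by
    apply div_pos (mul_pos (mul_pos hlam hs) ht)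
    positivity
  set p : ℝ := -2 / (chi + m - 1) with hp_def
  -- derivative of W at points where 1 + c*y > 0
  have hderiv1 : ∀ y : ℝ, 0 < 1 + c * y →
      HasDerivAt W (b * (c * p * (1 + c * y) ^ (p - 1))) y := by
    intro y hy
    rw [hW]
    have h1 : HasDerivAt (fun z : ℝ => 1 + c * z) c y := by
      simpa using ((hasDerivAt_id y).const_mul c).const_add 1
    exact (h1.rpow_const (Or.inl hy.ne')).const_mul b
  have hx1 : 0 < 1 + c * x := by nlinarith [mul_nonneg hc.le hx]
  have hopen : ∀ᶠ y in nhds x, 0 < 1 + c * y := by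
    have hcont : Continuous fun y : ℝ => 1 + c * y := by continuity
    exact (isOpen_lt continuous_const hcont).mem_nhds hx1
  have hev : deriv W =ᶠ[nhds x] fun y => b * (c * p * (1 + c * y) ^ (p - 1)) :=
    hopen.mono fun y hy => (hderiv1 y hy).deriv
  have hderiv2 : HasDerivAt (fun y => b * (c * p * (1 + c * y) ^ (p - 1)))
      (b * (c * p * (c * (p - 1) * (1 + c * x) ^ (p - 1 - 1)))) x := by
    have h1 : HasDerivAt (fun z : ℝ => 1 + c * z) c x := by
      simpa using ((hasDerivAt_id x).const_mul c).const_add 1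
    exact ((h1.rpow_const (Or.inl hx1.ne')).const_mul (c * p)).const_mul b
  have hkey : deriv (deriv W) x = b * (c * p * (c * (p - 1) * (1 + c * x) ^ (p - 1 - 1))) := by
    rw [hev.deriv_eq]
    exact hderiv2.deriv
  rw [hkey, hU, hW]
  simp only
  set v : ℝ := 1 + c * x with hv_def
  have hv : 0 < v := hx1
  -- rewrite RHS
  have hWm : (b * v ^ p) ^ m = b ^ m * v ^ (p * m) := by
    rw [Real.mul_rpow hb.le (Real.rpow_pos_of_pos hv _).le, ← Real.rpow_mul hv.le]
  have hexp : -(2 * chi) / (chi + m - 1) + p * m = p - 1 - 1 := by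
    rw [hp_def]
    field_simp
    ring
  have hcomb : v ^ (-(2 * chi) / (chi + m - 1)) * (b ^ m * v ^ (p * m))
      = b ^ m * v ^ (p - 1 - 1) := by
    rw [mul_comm (b ^ m), ← mul_assoc, ← Real.rpow_add hv, hexp]
    ring
  rw [hWm]
  conv_rhs => rw [mul_assoc, hcomb]
  -- coefficient identity
  have hbb : b ^ m * b ^ (1 - m) = b := by
    rw [← Real.rpow_add hb]
    norm_num
  set bm : ℝ := b ^ m with hbm_def
  set B : ℝ := b ^ (1 - m) with hB_def
  have hE : v ^ (p - 1 - 1) ≠ 0 := (Real.rpow_pos_of_pos hv _).ne'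
  have hcoef : eps * (b * (c * p * (c * (p - 1)))) =
      lam ^ 2 * (chi + 1 - m) ^ 2 / (2 * eps * (chi + m + 1) * B) * bm := by
    rw [← hbb, hc_def, hp_def]
    field_simp
    ring
  linear_combination v ^ (p - 1 - 1) * hcoef
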